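/- arXiv:2107.08676 — 2 statements merged into one kernel-verified Lean document; each statement's English description precedes it below -/
import Mathlib

section
/- Let f be an n-variable Boolean function and t ∈ [n]. Then t-inf(f) ≥ (4t/n)·Var(f). Moreover, equality holds when t = n. -/
open Finset

namespace BF

/-- Hamming weight of a vector in `F_2^n`. -/
def wt {n : ℕ} (a : Fin n → ZMod 2) : ℕ := (univ.filter fun i => a i ≠ 0).card

/-- Normalised Walsh transform `W_f(a) = 2^{-n} Σ_x (-1)^{f(x) ⊕ ⟨x,a⟩}`. -/
noncomputable def walsh {n : ℕ} (f : (Fin n → ZMod 2) → ZMod 2) (a : Fin n → ZMod 2) : ℝ :=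
  (1 / 2 ^ n) * ∑ x : Fin n → ZMod 2, (-1 : ℝ) ^ (f x + ∑ i, x i * a i).val

/-- Normalised auto-correlation `C_f(a) = 2^{-n} Σ_x (-1)^{f(x) ⊕ f(x ⊕ a)}`. -/
noncomputable def autocorr {n : ℕ} (f : (Fin n → ZMod 2) → ZMod 2) (a : Fin n → ZMod 2) : ℝ :=
  (1 / 2 ^ n) * ∑ x : Fin n → ZMod 2, (-1 : ℝ) ^ (f x + f (x + a)).val

/-- Influence of the set of variables `T` on `f`:
`inf_f(T) = 1 - 2^{-#T} Σ_{a ≤ χ_T} C_f(a)`. -/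
noncomputable def influence {n : ℕ} (f : (Fin n → ZMod 2) → ZMod 2) (T : Finset (Fin n)) : ℝ :=
  1 - (1 / 2 ^ T.card) *
    ∑ a ∈ univ.filter (fun a : Fin n → ZMod 2 => ∀ i, a i ≠ 0 → i ∈ T), autocorr f a

/-- Total influence `t-inf(f) = (Σ_{#T = t} inf_f(T)) / C(n,t)`. -/
noncomputable def totalInf {n : ℕ} (f : (Fin n → ZMod 2) → ZMod 2) (t : ℕ) : ℝ :=
  (∑ T ∈ univ.filter (fun T : Finset (Fin n) => T.card = t), influence f T) / (n.choose t)

/-- `p̂_f(k) = Σ_{wt(u) = k} (W_f(u))²`. -/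
noncomputable def pHat {n : ℕ} (f : (Fin n → ZMod 2) → ZMod 2) (k : ℕ) : ℝ :=
  ∑ u ∈ univ.filter (fun u : Fin n → ZMod 2 => wt u = k), (walsh f u) ^ 2

/-- Expectation of `f` over a uniform input. -/
noncomputable def expectation {n : ℕ} (f : (Fin n → ZMod 2) → ZMod 2) : ℝ :=
  ((univ.filter fun x : Fin n → ZMod 2 => f x = 1).card : ℝ) / 2 ^ n

/-- Variance of `f`: `Var(f) = E(f)(1 - E(f))`. -/
noncomputable def variance {n : ℕ} (f : (Fin n → ZMod 2) → ZMod 2) : ℝ :=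
  expectation f * (1 - expectation f)


/-! ### Auxiliary lemmas -/

noncomputable def chi (c : ZMod 2) : ℝ := (-1 : ℝ) ^ c.val

lemma zmod2_cases : ∀ a : ZMod 2, a = 0 ∨ a = 1 := by decide

lemma two_eq_zero : (1 + 1 : ZMod 2) = 0 := by decide

lemma chi_add (a b : ZMod 2) : chi (a + b) = chi a * chi b := by
  rcases zmod2_cases a with h | h <;> rcases zmod2_cases b with h' | h' <;>
    subst h <;> subst h' <;>
    simp [chi, two_eq_zero, ZMod.val_one]

@[simp] lemma chi_zero : chi 0 = 1 := by simp [chi]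

lemma chi_one : chi 1 = -1 := by simp [chi, ZMod.val_one]

def inn {n : ℕ} (x y : Fin n → ZMod 2) : ZMod 2 := ∑ i, x i * y i

lemma inn_comm {n : ℕ} (x y : Fin n → ZMod 2) : inn x y = inn y x := by
  unfold inn; exact Finset.sum_congr rfl fun i _ => mul_comm _ _

lemma inn_add_left {n : ℕ} (x y z : Fin n → ZMod 2) : inn (x + y) z = inn x z + inn y z := by
  unfold inn; rw [← Finset.sum_add_distrib]
  exact Finset.sum_congr rfl fun i _ => by simp [add_mul]

lemma inn_add_right {n : ℕ} (x y z : Fin n → ZMod 2) : inn x (y + z) = inn x y + inn x z := by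
  rw [inn_comm, inn_add_left, inn_comm y x, inn_comm z x]

lemma inn_zero_right {n : ℕ} (u : Fin n → ZMod 2) : inn u 0 = 0 := by
  unfold inn; simp

/-- character sum over a subcube -/
lemma char_sum_subcube {n : ℕ} (T : Finset (Fin n)) (u : Fin n → ZMod 2) :
    ∑ a ∈ univ.filter (fun a : Fin n → ZMod 2 => ∀ i, a i ≠ 0 → i ∈ T), chi (inn u a)
      = if ∀ i ∈ T, u i = 0 then (2 : ℝ) ^ T.card else 0 := by
  by_cases h : ∀ i ∈ T, u i = 0
  · rw [if_pos h]
    have key : ∀ a ∈ univ.filter (fun a : Fin n → ZMod 2 => ∀ i, a i ≠ 0 → i ∈ T),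
        chi (inn u a) = 1 := by
      intro a ha
      simp only [mem_filter, mem_univ, true_and] at ha
      have : inn u a = 0 := by
        unfold inn
        refine Finset.sum_eq_zero fun i _ => ?_
        by_cases hai : a i = 0
        · simp [hai]
        · rw [h i (ha i hai)]; ring
      rw [this, chi_zero]
    rw [Finset.sum_congr rfl key, Finset.sum_const, nsmul_eq_mul, mul_one]
    have hset : univ.filter (fun a : Fin n → ZMod 2 => ∀ i, a i ≠ 0 → i ∈ T)
        = Fintype.piFinset (fun i => if i ∈ T then (univ : Finset (ZMod 2)) else {0}) := by
      ext a
      simp only [mem_filter, mem_univ, true_and, Fintype.mem_piFinset]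
      constructor
      · intro ha i
        by_cases hiT : i ∈ T
        · simp [hiT]
        · rw [if_neg hiT, mem_singleton]
          by_contra hne
          exact hiT (ha i hne)
      · intro ha i hne
        by_contra hiT
        have := ha i
        rw [if_neg hiT, mem_singleton] at this
        exact hne this
    rw [hset, Fintype.card_piFinset]
    rw [show (∏ i, #(if i ∈ T then (univ : Finset (ZMod 2)) else {0})) =
        ∏ i, if i ∈ T then 2 else 1 from Finset.prod_congr rfl fun i _ => by
          by_cases hiT : i ∈ T <;> simp [hiT]]
    rw [Finset.prod_ite_mem, Finset.univ_inter, Finset.prod_const]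
    push_cast; ring
  · rw [if_neg h]
    push_neg at h
    obtain ⟨i0, hi0T, hi0⟩ := h
    have hu1 : u i0 = 1 := by
      rcases zmod2_cases (u i0) with h' | h'
      · exact absurd h' hi0
      · exact h'
    set e : Fin n → ZMod 2 := fun j => if j = i0 then 1 else 0 with he
    have hinne : inn u e = 1 := by
      unfold inn
      rw [Finset.sum_eq_single i0]
      · simp [he, hu1]
      · intro b _ hb; simp [he, hb]
      · simp
    refine Finset.sum_involution (fun a _ => a + e) ?_ ?_ ?_ ?_
    · intro a ha
      show chi (inn u a) + chi (inn u (a + e)) = 0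
      rw [inn_add_right, chi_add, hinne, chi_one]
      ring
    · intro a ha _
      show a + e ≠ a
      intro hcontra
      have := congrFun hcontra i0
      simp [he] at this
    · intro a ha
      simp only [mem_filter, mem_univ, true_and] at ha ⊢
      intro i hi
      by_cases hii : i = i0
      · exact hii ▸ hi0T
      · apply ha i
        simpa [he, Pi.add_apply, hii] using hi
    · intro a ha
      show a + e + e = a
      funext j
      by_cases hj : j = i0
      · simp [he, hj, add_assoc, two_eq_zero]
      · simp [he, hj]

lemma char_sum_full {n : ℕ} (u : Fin n → ZMod 2) :
    ∑ a : Fin n → ZMod 2, chi (inn u a) = if u = 0 then (2 : ℝ) ^ n else 0 := by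
  have := char_sum_subcube (univ : Finset (Fin n)) u
  simp only [mem_univ, implies_true, filter_true_of_mem, card_univ, Fintype.card_fin] at this
  rw [this]
  congr 1
  simp [funext_iff]

lemma add_self_zero {n : ℕ} (v : Fin n → ZMod 2) : v + v = 0 := by
  funext j
  show v j + v j = 0
  have : v j + v j = (1 + 1) * v j := by ring
  rw [this, two_eq_zero, zero_mul]

lemma walsh_eq_chi {n : ℕ} (f : (Fin n → ZMod 2) → ZMod 2) (a : Fin n → ZMod 2) :
    walsh f a = (1 / 2 ^ n) * ∑ x : Fin n → ZMod 2, chi (f x + inn x a) := rfl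

lemma autocorr_eq_sum_walsh {n : ℕ} (f : (Fin n → ZMod 2) → ZMod 2) (a : Fin n → ZMod 2) :
    autocorr f a = ∑ u : Fin n → ZMod 2, (walsh f u) ^ 2 * chi (inn u a) := by
  have expand : ∀ u, (walsh f u) ^ 2 * chi (inn u a)
      = (1 / 2 ^ n : ℝ)^2 * ∑ x : Fin n → ZMod 2, ∑ y : Fin n → ZMod 2,
          chi (f x) * chi (f y) * chi (inn (x + y + a) u) := by
    intro u
    have hS : (∑ x : Fin n → ZMod 2, chi (f x + inn x u)) ^ 2
        = ∑ x : Fin n → ZMod 2, ∑ y : Fin n → ZMod 2,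
            chi (f x + inn x u) * chi (f y + inn y u) := by
      rw [sq, Finset.sum_mul_sum]
    rw [walsh_eq_chi, mul_pow, hS]
    rw [mul_assoc]
    congr 1
    rw [Finset.sum_mul]
    refine Finset.sum_congr rfl fun x _ => ?_
    rw [Finset.sum_mul]
    refine Finset.sum_congr rfl fun y _ => ?_
    rw [chi_add, chi_add, inn_add_left, inn_add_left, chi_add, chi_add,
        inn_comm x u, inn_comm y u, inn_comm a u]
    ring
  rw [Finset.sum_congr rfl fun u _ => expand u, ← Finset.mul_sum]
  rw [Finset.sum_comm]
  have inner1 : ∀ x : Fin n → ZMod 2,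
      (∑ u : Fin n → ZMod 2, ∑ y : Fin n → ZMod 2,
        chi (f x) * chi (f y) * chi (inn (x + y + a) u))
      = (2:ℝ)^n * (chi (f x) * chi (f (x + a))) := by
    intro x
    rw [Finset.sum_comm]
    have step : ∀ y : Fin n → ZMod 2,
        (∑ u : Fin n → ZMod 2, chi (f x) * chi (f y) * chi (inn (x + y + a) u))
        = chi (f x) * chi (f y) * (if y = x + a then (2:ℝ)^n else 0) := by
      intro y
      rw [← Finset.mul_sum, char_sum_full]
      have hcond : (x + y + a = 0) ↔ (y = x + a) := by
        constructor
        · intro h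
          have h2 : y + (x + y + a) = y + 0 := by rw [h]
          have h3 : y + (x + y + a) = (y + y) + (x + a) := by abel
          rw [h3, add_self_zero, zero_add, add_zero] at h2
          exact h2.symm
        · intro h
          subst h
          have h3 : x + (x + a) + a = (x + x) + (a + a) := by abel
          rw [h3, add_self_zero, add_self_zero, add_zero]
      rw [if_congr hcond rfl rfl]
    rw [Finset.sum_congr rfl fun y _ => step y]
    simp only [mul_ite, mul_zero]
    rw [Finset.sum_ite_eq' univ (x + a) (fun y => chi (f x) * chi (f y) * (2:ℝ)^n)]
    simp only [mem_univ, if_true]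
    ring
  rw [Finset.sum_congr rfl fun x _ => inner1 x, ← Finset.mul_sum, autocorr]
  have : ∀ x : Fin n → ZMod 2, chi (f x) * chi (f (x+a)) = (-1:ℝ)^(f x + f (x+a)).val := by
    intro x; rw [← chi_add]; rfl
  rw [Finset.sum_congr rfl fun x _ => this x]
  have h2 : (2:ℝ)^n ≠ 0 := by positivity
  field_simp

lemma zmod2_add_self (a : ZMod 2) : a + a = 0 := by
  have : a + a = (1 + 1) * a := by ring
  rw [this, two_eq_zero, zero_mul]

lemma autocorr_zero {n : ℕ} (f : (Fin n → ZMod 2) → ZMod 2) : autocorr f 0 = 1 := by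
  unfold autocorr
  have : ∀ x : Fin n → ZMod 2, (-1 : ℝ) ^ (f x + f (x + 0)).val = 1 := by
    intro x
    rw [add_zero, zmod2_add_self]
    simp
  rw [Finset.sum_congr rfl fun x _ => this x, Finset.sum_const, Finset.card_univ]
  have hcard : Fintype.card (Fin n → ZMod 2) = 2 ^ n := by
    rw [Fintype.card_fun]; simp
  rw [hcard]
  simp

lemma parseval {n : ℕ} (f : (Fin n → ZMod 2) → ZMod 2) :
    ∑ u : Fin n → ZMod 2, (walsh f u) ^ 2 = 1 := by
  have := autocorr_eq_sum_walsh f (0 : Fin n → ZMod 2)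
  rw [autocorr_zero] at this
  rw [Finset.sum_congr rfl
    (fun u _ => by rw [inn_zero_right, chi_zero, mul_one])] at this
  exact this.symm

lemma influence_eq {n : ℕ} (f : (Fin n → ZMod 2) → ZMod 2) (T : Finset (Fin n)) :
    influence f T = 1 - ∑ u ∈ univ.filter (fun u : Fin n → ZMod 2 => ∀ i ∈ T, u i = 0),
      (walsh f u) ^ 2 := by
  unfold influence
  congr 1
  rw [Finset.sum_congr rfl fun a _ => autocorr_eq_sum_walsh f a]
  rw [Finset.sum_comm]
  have step : ∀ u : Fin n → ZMod 2,
      (∑ a ∈ univ.filter (fun a : Fin n → ZMod 2 => ∀ i, a i ≠ 0 → i ∈ T),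
        (walsh f u) ^ 2 * chi (inn u a))
      = (walsh f u) ^ 2 * (if ∀ i ∈ T, u i = 0 then (2:ℝ) ^ T.card else 0) := by
    intro u
    rw [← Finset.mul_sum, char_sum_subcube]
  rw [Finset.sum_congr rfl fun u _ => step u]
  simp only [mul_ite, mul_zero]
  rw [← Finset.sum_filter, ← Finset.sum_mul]
  have h2T : (2:ℝ) ^ T.card ≠ 0 := by positivity
  field_simp

lemma count_T {n t : ℕ} (u : Fin n → ZMod 2) :
    (univ.filter fun T : Finset (Fin n) => T.card = t ∧ ∀ i ∈ T, u i = 0).card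
      = (n - wt u).choose t := by
  have hset : (univ.filter fun T : Finset (Fin n) => T.card = t ∧ ∀ i ∈ T, u i = 0)
      = powersetCard t ((univ.filter fun i => u i ≠ 0)ᶜ) := by
    ext T
    simp only [mem_filter, mem_univ, true_and, mem_powersetCard]
    constructor
    · rintro ⟨hc, hz⟩
      refine ⟨fun i hi => ?_, hc⟩
      simp only [mem_compl, mem_filter, mem_univ, true_and, not_not]
      exact hz i hi
    · rintro ⟨hsub, hc⟩
      refine ⟨hc, fun i hi => ?_⟩
      have := hsub hi
      simpa using this
  rw [hset, Finset.card_powersetCard, Finset.card_compl]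
  congr 2
  simp [wt]

lemma card_T {n t : ℕ} :
    (univ.filter fun T : Finset (Fin n) => T.card = t).card = n.choose t := by
  have : (univ.filter fun T : Finset (Fin n) => T.card = t) = powersetCard t univ := by
    ext T; simp [mem_powersetCard, subset_univ]
  rw [this, Finset.card_powersetCard, card_univ, Fintype.card_fin]

lemma totalInf_eq {n t : ℕ} (f : (Fin n → ZMod 2) → ZMod 2) (ht : t ≤ n) :
    totalInf f t = ∑ u : Fin n → ZMod 2,
      (walsh f u) ^ 2 * (1 - ((n - wt u).choose t : ℝ) / (n.choose t)) := by
  have hC : (0:ℝ) < (n.choose t : ℝ) := by exact_mod_cast Nat.choose_pos ht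
  unfold totalInf
  rw [Finset.sum_congr rfl fun T _ => influence_eq f T]
  rw [Finset.sum_sub_distrib, Finset.sum_const, card_T, nsmul_eq_mul, mul_one]
  have swap : (∑ T ∈ univ.filter (fun T : Finset (Fin n) => T.card = t),
      ∑ u ∈ univ.filter (fun u : Fin n → ZMod 2 => ∀ i ∈ T, u i = 0), (walsh f u) ^ 2)
      = ∑ u : Fin n → ZMod 2, (walsh f u) ^ 2 * ((n - wt u).choose t : ℝ) := by
    have : ∀ T ∈ univ.filter (fun T : Finset (Fin n) => T.card = t),
        (∑ u ∈ univ.filter (fun u : Fin n → ZMod 2 => ∀ i ∈ T, u i = 0), (walsh f u) ^ 2)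
        = ∑ u : Fin n → ZMod 2, (if ∀ i ∈ T, u i = 0 then (walsh f u) ^ 2 else 0) := by
      intro T _
      rw [Finset.sum_filter]
    rw [Finset.sum_congr rfl this, Finset.sum_comm]
    refine Finset.sum_congr rfl fun u _ => ?_
    rw [← Finset.sum_filter, Finset.sum_const, Finset.filter_filter, count_T,
      nsmul_eq_mul, mul_comm]
  rw [swap]
  have hrhs : ∑ u : Fin n → ZMod 2,
      (walsh f u) ^ 2 * (1 - ((n - wt u).choose t : ℝ) / (n.choose t))
      = 1 - (∑ u : Fin n → ZMod 2, (walsh f u) ^ 2 * ((n - wt u).choose t : ℝ))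
          / (n.choose t) := by
    have hterm : ∀ u : Fin n → ZMod 2,
        (walsh f u) ^ 2 * (1 - ((n - wt u).choose t : ℝ) / (n.choose t))
        = (walsh f u) ^ 2 - ((walsh f u) ^ 2 * ((n - wt u).choose t : ℝ)) / (n.choose t) := by
      intro u; ring
    rw [Finset.sum_congr rfl fun u _ => hterm u, Finset.sum_sub_distrib, parseval,
      ← Finset.sum_div]
  rw [hrhs]
  field_simp

lemma walsh_zero {n : ℕ} (f : (Fin n → ZMod 2) → ZMod 2) :
    walsh f 0 = 1 - 2 * expectation f := by
  unfold walsh expectation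
  have h1 : ∀ x : Fin n → ZMod 2, (f x + ∑ i, x i * (0:Fin n → ZMod 2) i).val
      = (f x).val := by intro x; simp
  rw [Finset.sum_congr rfl fun x _ => by rw [h1 x]]
  have h2 : ∀ x : Fin n → ZMod 2, (-1:ℝ) ^ (f x).val = if f x = 1 then -1 else 1 := by
    intro x
    rcases zmod2_cases (f x) with h | h <;> rw [h] <;> simp [ZMod.val_one]
  rw [Finset.sum_congr rfl fun x _ => h2 x]
  rw [Finset.sum_ite, Finset.sum_const, Finset.sum_const]
  have hcard : (univ.filter fun x : Fin n → ZMod 2 => ¬ f x = 1).card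
      = 2 ^ n - (univ.filter fun x : Fin n → ZMod 2 => f x = 1).card := by
    rw [Finset.filter_not, Finset.card_sdiff_of_subset (Finset.filter_subset _ _), card_univ]
    congr 1
    rw [Fintype.card_fun]; simp
  rw [hcard]
  have hle : (univ.filter fun x : Fin n → ZMod 2 => f x = 1).card ≤ 2 ^ n := by
    have := Finset.card_filter_le (univ : Finset (Fin n → ZMod 2)) (fun x => f x = 1)
    rwa [card_univ, Fintype.card_fun, ZMod.card, Fintype.card_fin] at this
  have h2n : (2:ℝ) ^ n ≠ 0 := by positivity
  push_cast [Nat.cast_sub hle]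
  field_simp
  simp only [nsmul_eq_mul]; rw [Nat.cast_sub hle]; push_cast
  ring

lemma four_var {n : ℕ} (f : (Fin n → ZMod 2) → ZMod 2) :
    4 * variance f = 1 - (walsh f 0) ^ 2 := by
  rw [walsh_zero]; unfold variance; ring

/-- `t-inf(f) ≥ (4t/n) Var(f)`, with equality when `t = n`. -/
theorem totalInf_ge_var {n : ℕ} (f : (Fin n → ZMod 2) → ZMod 2) (t : ℕ)
    (h1 : 1 ≤ t) (h2 : t ≤ n) :
    totalInf f t ≥ (4 * t / n) * variance f ∧
      (t = n → totalInf f t = (4 * t / n) * variance f) := by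
  have hn : 1 ≤ n := le_trans h1 h2
  have hC : 0 < n.choose t := Nat.choose_pos h2
  have hCR : (0:ℝ) < (n.choose t : ℝ) := by exact_mod_cast hC
  have hnR : (0:ℝ) < (n : ℝ) := by exact_mod_cast hn
  rw [totalInf_eq f h2]
  have hwt0 : wt (0 : Fin n → ZMod 2) = 0 := by simp [wt]
  have hc0 : (1 - ((n - wt (0 : Fin n → ZMod 2)).choose t : ℝ) / (n.choose t)) = 0 := by
    rw [hwt0, Nat.sub_zero, div_self (ne_of_gt hCR), sub_self]
  have hsplit : ∑ u : Fin n → ZMod 2,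
      (walsh f u) ^ 2 * (1 - ((n - wt u).choose t : ℝ) / (n.choose t))
      = ∑ u ∈ (univ : Finset (Fin n → ZMod 2)).erase 0,
          (walsh f u) ^ 2 * (1 - ((n - wt u).choose t : ℝ) / (n.choose t)) := by
    rw [← Finset.sum_erase_add univ _ (mem_univ (0 : Fin n → ZMod 2)), hc0, mul_zero, add_zero]
  have hsum0 : ∑ u ∈ (univ : Finset (Fin n → ZMod 2)).erase 0, (walsh f u) ^ 2
      = 1 - (walsh f 0) ^ 2 := by
    have h := Finset.sum_erase_add univ (fun u => (walsh f u) ^ 2)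
      (mem_univ (0 : Fin n → ZMod 2))
    rw [parseval] at h
    linarith
  have hvar : (4 * (t:ℝ) / n) * variance f
      = ((t:ℝ)/n) * ∑ u ∈ (univ : Finset (Fin n → ZMod 2)).erase 0, (walsh f u) ^ 2 := by
    rw [hsum0, show (4 * (t:ℝ) / n) * variance f = ((t:ℝ)/n) * (4 * variance f) by ring,
      four_var]
  have hterm : ∀ u ∈ (univ : Finset (Fin n → ZMod 2)).erase 0,
      (t:ℝ)/n ≤ 1 - ((n - wt u).choose t : ℝ) / (n.choose t) := by
    intro u hu
    have hune : u ≠ 0 := (Finset.mem_erase.mp hu).1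
    have hk : 1 ≤ wt u := by
      obtain ⟨i, hi⟩ : ∃ i, u i ≠ 0 := by
        by_contra hcon
        push_neg at hcon
        exact hune (funext hcon)
      exact Finset.card_pos.mpr ⟨i, by simp [hi]⟩
    set k := wt u with hkd
    have step1 : (n - k).choose t ≤ (n - 1).choose t :=
      Nat.choose_le_choose t (Nat.sub_le_sub_left hk n)
    have step2 : n * (n - 1).choose t = n.choose t * (n - t) := by
      have hn1 : n - 1 + 1 = n := Nat.succ_pred_eq_of_pos hn
      have hmul := Nat.add_one_mul_choose_eq (n - 1) t
      rw [hn1] at hmul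
      rw [hmul, Nat.choose_succ_right_eq]
    have keyN : n * (n - k).choose t ≤ n.choose t * (n - t) := by
      calc n * (n - k).choose t ≤ n * (n - 1).choose t :=
            Nat.mul_le_mul_left n step1
        _ = n.choose t * (n - t) := step2
    have keyR : (n:ℝ) * ((n - k).choose t : ℝ) ≤ (n.choose t : ℝ) * ((n:ℝ) - t) := by
      have := (Nat.cast_le (α := ℝ)).mpr keyN
      push_cast [Nat.cast_sub h2] at this
      linarith
    have hq : ((n - k).choose t : ℝ) / (n.choose t) ≤ ((n:ℝ) - t) / n := by
      rw [div_le_div_iff₀ hCR hnR]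
      nlinarith [keyR]
    have h1n : 1 - ((n:ℝ) - t)/n = (t:ℝ)/n := by field_simp; ring
    linarith
  constructor
  · rw [hsplit, hvar, Finset.mul_sum]
    refine Finset.sum_le_sum fun u hu => ?_
    have h1' := hterm u hu
    have hW : (0:ℝ) ≤ (walsh f u) ^ 2 := sq_nonneg _
    calc (t:ℝ)/n * (walsh f u) ^ 2
        ≤ (1 - ((n - wt u).choose t : ℝ) / (n.choose t)) * (walsh f u) ^ 2 :=
          mul_le_mul_of_nonneg_right h1' hW
      _ = (walsh f u) ^ 2 * (1 - ((n - wt u).choose t : ℝ) / (n.choose t)) := mul_comm _ _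
  · intro hteq
    subst hteq
    rw [hsplit, hvar]
    have hcn : ∀ u ∈ (univ : Finset (Fin t → ZMod 2)).erase 0,
        (walsh f u) ^ 2 * (1 - ((t - wt u).choose t : ℝ) / (t.choose t))
        = (walsh f u) ^ 2 := by
      intro u hu
      have hune : u ≠ 0 := (Finset.mem_erase.mp hu).1
      have hk : 1 ≤ wt u := by
        obtain ⟨i, hi⟩ : ∃ i, u i ≠ 0 := by
          by_contra hcon
          push_neg at hcon
          exact hune (funext hcon)
        exact Finset.card_pos.mpr ⟨i, by simp [hi]⟩
      have : (t - wt u).choose t = 0 :=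
        Nat.choose_eq_zero_of_lt (Nat.sub_lt (lt_of_lt_of_le Nat.zero_lt_one h1) hk)
      rw [this]
      simp
    rw [Finset.sum_congr rfl hcn, div_self (ne_of_gt hnR), one_mul]


end BF
end

section
/- Let f be an n-variable Boolean function which is ε-far from being an s-junta. Then for every subset S ⊆ [n] with #S ≤ s, inf_f([n] \ S) ≥ 2ε. -/
open Finset

namespace BF

/-- `g` is an `s`-junta: its output depends only on a set `S` of at most `s` variables. -/
def isJunta {n : ℕ} (s : ℕ) (g : (Fin n → ZMod 2) → ZMod 2) : Prop :=
  ∃ S : Finset (Fin n), S.card ≤ s ∧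
    ∀ x y : Fin n → ZMod 2, (∀ i ∈ S, x i = y i) → g x = g y

lemma sgn (u v : ZMod 2) : (-1:ℝ)^((u+v).val) = if u = v then 1 else -1 := by
  fin_cases u <;> fin_cases v
  · show (-1:ℝ)^((0:ZMod 2)+0).val = if (0:ZMod 2) = 0 then 1 else -1
    norm_num [show ((1:ZMod 2)+1) = 0 from rfl, show (1:ZMod 2).val = 1 from rfl]
  · show (-1:ℝ)^((0:ZMod 2)+1).val = if (0:ZMod 2) = 1 then 1 else -1
    norm_num [show ((1:ZMod 2)+1) = 0 from rfl, show (1:ZMod 2).val = 1 from rfl]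
  · show (-1:ℝ)^((1:ZMod 2)+0).val = if (1:ZMod 2) = 0 then 1 else -1
    norm_num [show ((1:ZMod 2)+1) = 0 from rfl, show (1:ZMod 2).val = 1 from rfl]
  · show (-1:ℝ)^((1:ZMod 2)+1).val = if (1:ZMod 2) = 1 then 1 else -1
    rw [show ((1:ZMod 2)+1) = 0 from rfl]
    norm_num [show ((1:ZMod 2)+1) = 0 from rfl, show (1:ZMod 2).val = 1 from rfl]

/-- the set of vectors supported on `Sᶜ` -/
def AA {n : ℕ} (S : Finset (Fin n)) : Finset (Fin n → ZMod 2) :=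
  univ.filter (fun a : Fin n → ZMod 2 => ∀ i, a i ≠ 0 → i ∈ Sᶜ)

lemma mem_AA {n : ℕ} {S : Finset (Fin n)} {a : Fin n → ZMod 2} :
    a ∈ AA S ↔ ∀ i ∈ S, a i = 0 := by
  simp only [AA, mem_filter, mem_univ, true_and, Finset.mem_compl]
  constructor
  · intro h i hi
    by_contra hne
    exact h i hne hi
  · intro h i hne hi
    exact hne (h i hi)

lemma card_AA {n : ℕ} (S : Finset (Fin n)) : (AA S).card = 2 ^ Sᶜ.card := by
  classical
  have e : {a : Fin n → ZMod 2 // a ∈ AA S} ≃ ((Sᶜ : Finset (Fin n)) → ZMod 2) :=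
    { toFun := fun a i => a.1 i.1
      invFun := fun z => ⟨fun i => if h : i ∈ Sᶜ then z ⟨i, h⟩ else 0, by
        simp only [mem_AA]
        intro i hi
        simp [Finset.mem_compl, hi]⟩
      left_inv := by
        rintro ⟨a, ha⟩
        ext i
        by_cases h : i ∈ Sᶜ
        · simp [h]
        · simp only [h, dif_neg, not_false_iff]
          have := (mem_AA.1 ha) i (by simpa using h)
          simp [this]
      right_inv := by
        intro z
        ext i
        simp [i.2] }
  have h1 : (AA S).card = Fintype.card {a : Fin n → ZMod 2 // a ∈ AA S} :=
    (Fintype.card_coe (AA S)).symm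
  rw [h1, Fintype.card_congr e, Fintype.card_fun]
  simp [Finset.card_compl]

def Dc {n : ℕ} (f : (Fin n → ZMod 2) → ZMod 2) (a : Fin n → ZMod 2) : ℕ :=
  (univ.filter fun x => f x ≠ f (x + a)).card

lemma autocorr_eq {n : ℕ} (f : (Fin n → ZMod 2) → ZMod 2) (a : Fin n → ZMod 2) :
    autocorr f a = ((2:ℝ)^n - 2 * Dc f a) / 2 ^ n := by
  have hsum : ∑ x : Fin n → ZMod 2, (-1 : ℝ) ^ (f x + f (x + a)).val
      = (2:ℝ)^n - 2 * Dc f a := by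
    have : ∀ x : Fin n → ZMod 2, (-1 : ℝ) ^ (f x + f (x + a)).val
        = if f x = f (x + a) then 1 else -1 := fun x => sgn _ _
    rw [Finset.sum_congr rfl fun x _ => this x]
    rw [Finset.sum_ite, Finset.sum_const, Finset.sum_const]
    have hcard : ((univ.filter fun x : Fin n → ZMod 2 => f x = f (x + a)).card : ℝ)
        = 2^n - Dc f a := by
      have := Finset.card_filter_add_card_filter_not
        (s := (univ : Finset (Fin n → ZMod 2)))
        (p := fun x => f x = f (x + a))
      have hc : (univ : Finset (Fin n → ZMod 2)).card = 2 ^ n := by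
        simp [Fintype.card_fun]
      rw [hc] at this
      have : ((univ.filter fun x : Fin n → ZMod 2 => f x = f (x + a)).card : ℝ)
          + ((univ.filter fun x : Fin n → ZMod 2 => ¬ f x = f (x + a)).card : ℝ) = 2 ^ n := by
        exact_mod_cast congrArg (Nat.cast : ℕ → ℝ) this
      have hd : ((univ.filter fun x : Fin n → ZMod 2 => ¬ f x = f (x + a)).card : ℝ)
          = (Dc f a : ℝ) := by
        simp [Dc]
      linarith [this, hd]
    have hd : ((univ.filter fun x : Fin n → ZMod 2 => ¬ f x = f (x + a)).card : ℝ)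
        = (Dc f a : ℝ) := by simp [Dc]
    simp only [nsmul_eq_mul, mul_one, mul_neg_one]
    rw [hcard, hd]
    ring
  rw [autocorr, hsum]
  ring

lemma influence_eq_s14 {n : ℕ} (f : (Fin n → ZMod 2) → ZMod 2) (S : Finset (Fin n)) :
    influence f Sᶜ = 2 * (∑ a ∈ AA S, (Dc f a : ℝ)) / (2 ^ Sᶜ.card * 2 ^ n) := by
  have hA : (univ.filter (fun a : Fin n → ZMod 2 => ∀ i, a i ≠ 0 → i ∈ Sᶜ)) = AA S := rfl
  rw [influence, hA]
  rw [Finset.sum_congr rfl fun a _ => autocorr_eq f a]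
  have h2 : ∑ a ∈ AA S, ((2:ℝ)^n - 2 * Dc f a)/2^n
      = (((AA S).card : ℝ) * 2^n - 2 * ∑ a ∈ AA S, (Dc f a : ℝ)) / 2^n := by
    rw [← Finset.sum_div, Finset.sum_sub_distrib, Finset.sum_const, ← Finset.mul_sum]
    simp [nsmul_eq_mul]
  rw [h2, card_AA]
  have h2n : (2:ℝ)^n ≠ 0 := by positivity
  have hT : (2:ℝ)^Sᶜ.card ≠ 0 := by positivity
  push_cast
  field_simp
  ring

def mix {n : ℕ} (S : Finset (Fin n)) (z x : Fin n → ZMod 2) : Fin n → ZMod 2 :=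
  fun i => if i ∈ S then x i else z i

def dz {n : ℕ} (f : (Fin n → ZMod 2) → ZMod 2) (S : Finset (Fin n))
    (z : Fin n → ZMod 2) : ℕ :=
  (univ.filter fun x => f x ≠ f (mix S z x)).card

/-- projection of `x` onto the complement of `S` -/
def proj {n : ℕ} (S : Finset (Fin n)) (x : Fin n → ZMod 2) : Fin n → ZMod 2 :=
  fun i => if i ∈ S then 0 else x i

lemma proj_mem_AA {n : ℕ} (S : Finset (Fin n)) (x : Fin n → ZMod 2) : proj S x ∈ AA S := by
  rw [mem_AA]
  intro i hi
  simp [proj, hi]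

lemma add_mem_AA {n : ℕ} {S : Finset (Fin n)} {a b : Fin n → ZMod 2}
    (ha : a ∈ AA S) (hb : b ∈ AA S) : a + b ∈ AA S := by
  rw [mem_AA] at *
  intro i hi
  simp [Pi.add_apply, ha i hi, hb i hi]

lemma mix_eq {n : ℕ} {S : Finset (Fin n)} {z : Fin n → ZMod 2} (hz : z ∈ AA S)
    (x : Fin n → ZMod 2) : mix S z x = x + (z + proj S x) := by
  funext i
  by_cases h : i ∈ S
  · have hz0 : z i = 0 := mem_AA.1 hz i h
    simp [mix, proj, h, hz0]
  · simp only [mix, proj, if_neg h, Pi.add_apply]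
    rw [add_comm (z i) (x i), ← add_assoc, CharTwo.add_self_eq_zero, zero_add]

lemma sum_dz {n : ℕ} (f : (Fin n → ZMod 2) → ZMod 2) (S : Finset (Fin n)) :
    ∑ z ∈ AA S, dz f S z = ∑ a ∈ AA S, Dc f a := by
  have hz' : ∀ z ∈ AA S, dz f S z = ∑ x : Fin n → ZMod 2, if f x ≠ f (mix S z x) then 1 else 0 := by
    intro z _
    simp [dz, Finset.card_filter]
  have ha' : ∀ a ∈ AA S, Dc f a = ∑ x : Fin n → ZMod 2, if f x ≠ f (x + a) then 1 else 0 := by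
    intro a _
    simp [Dc, Finset.card_filter]
  rw [Finset.sum_congr rfl hz', Finset.sum_congr rfl ha', Finset.sum_comm,
    Finset.sum_comm (s := AA S)]
  refine Finset.sum_congr rfl fun x _ => ?_
  refine Finset.sum_nbij' (fun z => z + proj S x) (fun a => a + proj S x) ?_ ?_ ?_ ?_ ?_
  · intro z hz; exact add_mem_AA hz (proj_mem_AA S x)
  · intro a ha; exact add_mem_AA ha (proj_mem_AA S x)
  · intro z _
    funext i
    simp [Pi.add_apply, add_assoc, CharTwo.add_self_eq_zero]
  · intro a _
    funext i
    simp [Pi.add_apply, add_assoc, CharTwo.add_self_eq_zero]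
  · intro z hz
    rw [mix_eq hz x]

/-- if `f` is `ε`-far from every `s`-junta, then for every `S ⊆ [n]` with
`#S ≤ s`, `inf_f([n] \ S) ≥ 2ε`. -/
theorem influence_far_from_junta {n : ℕ} (f : (Fin n → ZMod 2) → ZMod 2) (s : ℕ) (ε : ℝ)
    (hfar : ∀ g : (Fin n → ZMod 2) → ZMod 2, isJunta s g →
      ε ≤ ((univ.filter fun x : Fin n → ZMod 2 => f x ≠ g x).card : ℝ) / 2 ^ n) :
    ∀ S : Finset (Fin n), S.card ≤ s → 2 * ε ≤ influence f Sᶜ := by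
  intro S hS
  classical
  obtain ⟨z0, hz0A, hz0min⟩ := Finset.exists_min_image (AA S) (dz f S)
    ⟨0, by simp [mem_AA]⟩
  have hjunta : isJunta s (fun x => f (mix S z0 x)) := by
    refine ⟨S, hS, fun x y hxy => ?_⟩
    simp only
    congr 1
    funext i
    simp only [mix]
    split_ifs with h
    · exact hxy i h
    · rfl
  have hε : ε ≤ (dz f S z0 : ℝ) / 2 ^ n := by
    have := hfar (fun x => f (mix S z0 x)) hjunta
    simpa [dz] using this
  have hcount : (AA S).card * dz f S z0 ≤ ∑ a ∈ AA S, Dc f a := by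
    rw [← sum_dz]
    calc (AA S).card * dz f S z0 = ∑ _z ∈ AA S, dz f S z0 := by
          rw [Finset.sum_const, smul_eq_mul]
      _ ≤ ∑ z ∈ AA S, dz f S z := Finset.sum_le_sum fun z hz => hz0min z hz
  rw [influence_eq_s14]
  have hcA : ((AA S).card : ℝ) = 2 ^ Sᶜ.card := by exact_mod_cast card_AA S
  have h1 : (2:ℝ) ^ Sᶜ.card * (dz f S z0 : ℝ) ≤ ∑ a ∈ AA S, (Dc f a : ℝ) := by
    rw [← hcA]
    exact_mod_cast hcount
  have h2n : (0:ℝ) < 2 ^ n := by positivity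
  have hεd : ε * 2 ^ n ≤ (dz f S z0 : ℝ) := by
    rw [← le_div_iff₀ h2n]; exact hε
  have hpos : (0:ℝ) < 2 ^ Sᶜ.card * 2 ^ n := by positivity
  rw [le_div_iff₀ hpos]
  have hc : (0:ℝ) < 2 ^ Sᶜ.card := by positivity
  nlinarith [mul_le_mul_of_nonneg_left hεd (le_of_lt hc)]


end BF
end
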